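/- For D ∈ 𝔇_n, the set Σ_R(P_D) of linear extensions of the canonical poset P_D equals the image under the map f(γ) = w_0γ⁻¹ of the left weak Bruhat interval [read(T_source), read(T_sink)]_L, where T_source is the standard tableau filling D along rows left-to-right from the lowermost row and T_sink fills D along columns bottom-to-top from the leftmost column, and read reads entries along rows right to left starting with the lowermost row. -/

import Mathlib

open Equiv

/-- Coxeter length of a permutation = number of inversions. -/
def len {n : ℕ} (σ : Perm (Fin n)) : ℕ :=
  (Finset.univ.filter fun p : Fin n × Fin n => p.1 < p.2 ∧ σ p.2 < σ p.1).card

/-- The simple transposition `s_i = (i, i+1)` (0-indexed). -/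
def simpleT {n : ℕ} (i : ℕ) (h : i + 1 < n) : Perm (Fin n) :=
  Equiv.swap ⟨i, Nat.lt_of_succ_lt h⟩ ⟨i + 1, h⟩

/-- Covering relation of the left weak Bruhat order. -/
def leftCov {n : ℕ} (σ τ : Perm (Fin n)) : Prop :=
  ∃ i, ∃ h : i + 1 < n, τ = simpleT i h * σ ∧ len σ < len τ

/-- The left weak Bruhat order. -/
def leftWeakLe {n : ℕ} : Perm (Fin n) → Perm (Fin n) → Prop :=
  Relation.ReflTransGen leftCov

/-- The left weak Bruhat interval `[σ,ρ]_L`. -/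
def leftInterval {n : ℕ} (σ ρ : Perm (Fin n)) : Set (Perm (Fin n)) :=
  {γ | leftWeakLe σ γ ∧ leftWeakLe γ ρ}

/-- Row-reading enumeration: rows top to bottom, within a row left to right. -/
def RowEnum {n : ℕ} (e : Fin n → ℕ × ℕ) : Prop :=
  ∀ i j : Fin n, i < j ↔ ((e j).2 < (e i).2 ∨ ((e i).2 = (e j).2 ∧ (e i).1 < (e j).1))

/-- Filling order of the sink standard tableau: columns left to right, within a
column bottom to top. -/
def ColEnum {n : ℕ} (t : Fin n → ℕ × ℕ) : Prop :=
  ∀ i j : Fin n, i < j ↔ ((t i).1 < (t j).1 ∨ ((t i).1 = (t j).1 ∧ (t i).2 < (t j).2))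

/-- Filling order of the source standard tableau: rows bottom to top, within a
row left to right. -/
def SrcEnum {n : ℕ} (u : Fin n → ℕ × ℕ) : Prop :=
  ∀ i j : Fin n, i < j ↔ ((u i).2 < (u j).2 ∨ ((u i).2 = (u j).2 ∧ (u i).1 < (u j).1))

/-- Reading order of `read`: rows bottom to top, within a row right to left. -/
def ReadEnum {n : ℕ} (r : Fin n → ℕ × ℕ) : Prop :=
  ∀ i j : Fin n, i < j ↔ ((r i).2 < (r j).2 ∨ ((r i).2 = (r j).2 ∧ (r j).1 < (r i).1))

/-- Membership in `𝔇_n`: no empty rows or columns. -/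
def DiagOK (D : Finset (ℕ × ℕ)) : Prop :=
  (∃ l, D.image Prod.fst = Finset.Icc 1 l) ∧ (∃ k, D.image Prod.snd = Finset.Icc 1 k)

/-- `Σ_R(P_D)` for the canonical poset `P_D` labeled via the row-reading
enumeration `e`. -/
def SigmaRD {n : ℕ} (e : Fin n → ℕ × ℕ) : Set (Perm (Fin n)) :=
  {γ | ∀ i j : Fin n,
    ((e i).1 ≤ (e j).1 ∧ (e i).2 ≤ (e j).2 ∧ i ≠ j) → γ⁻¹ i < γ⁻¹ j}


theorem Equiv.Perm.apply_inv_self {α : Type*} (f : Perm α) (x : α) : f (f⁻¹ x) = x :=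
  f.apply_symm_apply x

theorem Equiv.Perm.inv_apply_self {α : Type*} (f : Perm α) (x : α) : f⁻¹ (f x) = x :=
  f.symm_apply_apply x

section WeakOrder
variable {n : ℕ}

def invF (σ : Perm (Fin n)) : Finset (Fin n × Fin n) :=
  Finset.univ.filter fun p : Fin n × Fin n => p.1 < p.2 ∧ σ p.2 < σ p.1

lemma len_eq (σ : Perm (Fin n)) : len σ = (invF σ).card := rfl

lemma mem_invF {σ : Perm (Fin n)} {p : Fin n × Fin n} :
    p ∈ invF σ ↔ p.1 < p.2 ∧ σ p.2 < σ p.1 := by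
  simp [invF]

lemma strictMono_fin_id {g : Fin n → Fin n} (h : StrictMono g) : ∀ i, g i = i := by
  have hle : ∀ i : Fin n, (i : ℕ) ≤ (g i : ℕ) := by
    have key : ∀ k : ℕ, ∀ i : Fin n, (i : ℕ) = k → k ≤ (g i : ℕ) := by
      intro k
      induction k with
      | zero => intro i _; omega
      | succ m ih =>
        intro i hi
        have hm : m < n := by omega
        have hlt : (⟨m, hm⟩ : Fin n) < i := by simp [Fin.lt_def]; omega
        have h1 : (g ⟨m, hm⟩ : ℕ) < (g i : ℕ) := h hlt
        have h2 := ih ⟨m, hm⟩ rfl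
        omega
    exact fun i => key (i : ℕ) i rfl
  have hbij : Function.Bijective g := Finite.injective_iff_bijective.mp h.injective
  have hsum : ∑ i : Fin n, ((g i : ℕ)) = ∑ i : Fin n, (i : ℕ) :=
    Equiv.sum_comp (Equiv.ofBijective g hbij) (fun i => (i : ℕ))
  intro i
  by_contra hne
  have hlt : (i : ℕ) < (g i : ℕ) := lt_of_le_of_ne (hle i) (fun hh => hne (Fin.ext hh.symm))
  have : ∑ j : Fin n, (j : ℕ) < ∑ j : Fin n, ((g j : ℕ)) :=
    Finset.sum_lt_sum (fun j _ => hle j) ⟨i, Finset.mem_univ i, hlt⟩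
  omega

lemma exists_descent {π : Perm (Fin n)} (hπ : π ≠ 1) :
    ∃ i, ∃ h : i + 1 < n, π ⟨i + 1, h⟩ < π ⟨i, Nat.lt_of_succ_lt h⟩ := by
  by_contra hc
  push_neg at hc
  have step : ∀ (i : ℕ) (h : i + 1 < n),
      π ⟨i, Nat.lt_of_succ_lt h⟩ < π ⟨i + 1, h⟩ := by
    intro i h
    refine lt_of_le_of_ne (hc i h) ?_
    intro he
    have := π.injective he
    simp [Fin.ext_iff] at this
  have key : ∀ d : ℕ, ∀ a b : Fin n, (b : ℕ) = (a : ℕ) + d + 1 → π a < π b := by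
    intro d
    induction d with
    | zero =>
      intro a b hb
      have h1 : (a : ℕ) + 1 < n := by omega
      have hba : b = ⟨(a : ℕ) + 1, h1⟩ := Fin.ext (by simp; omega)
      rw [hba]
      exact step (a : ℕ) h1
    | succ m ih =>
      intro a b hb
      have hm : (a : ℕ) + m + 1 < n := by omega
      have h1 := ih a ⟨(a : ℕ) + m + 1, hm⟩ (by simp)
      refine h1.trans ?_
      have h2 : (a : ℕ) + m + 1 + 1 < n := by omega
      have hbb : b = ⟨(a : ℕ) + m + 1 + 1, h2⟩ := Fin.ext (by simp; omega)
      rw [hbb]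
      exact step ((a : ℕ) + m + 1) h2
  have hsm : StrictMono (π : Fin n → Fin n) := by
    intro a b hab
    exact key ((b : ℕ) - (a : ℕ) - 1) a b (by have := Fin.lt_def.mp hab; omega)
  exact hπ (Equiv.ext fun i => strictMono_fin_id hsm i)

lemma simpleT_lt_iff {i : ℕ} (h : i + 1 < n) (x y : Fin n) :
    simpleT i h x < simpleT i h y ↔
      (if (x = ⟨i, Nat.lt_of_succ_lt h⟩ ∧ y = ⟨i + 1, h⟩) ∨
          (x = ⟨i + 1, h⟩ ∧ y = ⟨i, Nat.lt_of_succ_lt h⟩)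
       then y < x else x < y) := by
  rcases x with ⟨xv, hx⟩; rcases y with ⟨yv, hy⟩
  unfold simpleT
  simp only [Equiv.swap_apply_def, Fin.lt_def, Fin.mk.injEq]
  split_ifs <;> simp_all <;> omega

end WeakOrder

section Part2
variable {n : ℕ}

lemma invF_insert {i : ℕ} (h : i + 1 < n) (σ : Perm (Fin n))
    (hpq : σ⁻¹ ⟨i, Nat.lt_of_succ_lt h⟩ < σ⁻¹ ⟨i + 1, h⟩) :
    invF (simpleT i h * σ) =
      insert (σ⁻¹ ⟨i, Nat.lt_of_succ_lt h⟩, σ⁻¹ ⟨i + 1, h⟩) (invF σ) ∧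
    (σ⁻¹ ⟨i, Nat.lt_of_succ_lt h⟩, σ⁻¹ ⟨i + 1, h⟩) ∉ invF σ := by
  have hσp : σ (σ⁻¹ ⟨i, Nat.lt_of_succ_lt h⟩) = ⟨i, Nat.lt_of_succ_lt h⟩ :=
    Perm.apply_inv_self σ _
  have hσq : σ (σ⁻¹ ⟨i + 1, h⟩) = ⟨i + 1, h⟩ := Perm.apply_inv_self σ _
  have h01 : (⟨i, Nat.lt_of_succ_lt h⟩ : Fin n) < ⟨i + 1, h⟩ := by
    simp [Fin.lt_def]
  have e0 : ∀ a : Fin n, σ a = ⟨i, Nat.lt_of_succ_lt h⟩ →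
      a = σ⁻¹ ⟨i, Nat.lt_of_succ_lt h⟩ := fun a ha => by
    rw [← ha, Perm.inv_apply_self]
  have e1 : ∀ a : Fin n, σ a = ⟨i + 1, h⟩ → a = σ⁻¹ ⟨i + 1, h⟩ := fun a ha => by
    rw [← ha, Perm.inv_apply_self]
  constructor
  · ext ⟨a, b⟩
    simp only [mem_invF, Finset.mem_insert, Prod.mk.injEq, Perm.mul_apply]
    have key := simpleT_lt_iff h (σ b) (σ a)
    constructor
    · rintro ⟨hab, hlt⟩
      rw [key] at hlt
      split_ifs at hlt with hcond
      · rcases hcond with ⟨hb, ha⟩ | ⟨hb, ha⟩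
        · exfalso
          rw [e1 a ha, e0 b hb] at hab
          exact absurd (hab.trans hpq) (lt_irrefl _)
        · exact Or.inl ⟨e0 a ha, e1 b hb⟩
      · exact Or.inr ⟨hab, hlt⟩
    · rintro (⟨ha, hb⟩ | ⟨hab, hlt⟩)
      · subst ha; subst hb
        refine ⟨hpq, ?_⟩
        rw [key, if_pos (Or.inr ⟨hσq, hσp⟩), hσp, hσq]
        exact h01
      · refine ⟨hab, ?_⟩
        rw [key]
        split_ifs with hcond
        · exfalso
          rcases hcond with ⟨hb, ha⟩ | ⟨hb, ha⟩
          · rw [e1 a ha, e0 b hb] at hab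
            exact absurd (hab.trans hpq) (lt_irrefl _)
          · rw [hb, ha] at hlt
            exact absurd (hlt.trans h01) (lt_irrefl _)
        · exact hlt
  · rw [mem_invF]
    rintro ⟨-, hlt⟩
    simp only at hlt
    rw [hσp, hσq] at hlt
    exact absurd (hlt.trans h01) (lt_irrefl _)

lemma invF_erase {i : ℕ} (h : i + 1 < n) (σ : Perm (Fin n))
    (hqp : σ⁻¹ ⟨i + 1, h⟩ < σ⁻¹ ⟨i, Nat.lt_of_succ_lt h⟩) :
    invF σ =
      insert (σ⁻¹ ⟨i + 1, h⟩, σ⁻¹ ⟨i, Nat.lt_of_succ_lt h⟩) (invF (simpleT i h * σ)) ∧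
    (σ⁻¹ ⟨i + 1, h⟩, σ⁻¹ ⟨i, Nat.lt_of_succ_lt h⟩) ∉ invF (simpleT i h * σ) := by
  have hss : simpleT i h * simpleT i h = 1 := Equiv.swap_mul_self _ _
  have hστ : σ = simpleT i h * (simpleT i h * σ) := by
    rw [← mul_assoc, hss, one_mul]
  have hτ0 : (simpleT i h * σ)⁻¹ ⟨i, Nat.lt_of_succ_lt h⟩ = σ⁻¹ ⟨i + 1, h⟩ := by
    rw [mul_inv_rev, Perm.mul_apply]
    congr 1
    show (Equiv.swap _ _)⁻¹ _ = _
    rw [Equiv.swap_inv, Equiv.swap_apply_left]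
  have hτ1 : (simpleT i h * σ)⁻¹ ⟨i + 1, h⟩ = σ⁻¹ ⟨i, Nat.lt_of_succ_lt h⟩ := by
    rw [mul_inv_rev, Perm.mul_apply]
    congr 1
    show (Equiv.swap _ _)⁻¹ _ = _
    rw [Equiv.swap_inv, Equiv.swap_apply_right]
  have := invF_insert h (simpleT i h * σ) (by rw [hτ0, hτ1]; exact hqp)
  rw [hτ0, hτ1, ← hστ] at this
  exact this

lemma leftCov_subset {σ τ : Perm (Fin n)} (hc : leftCov σ τ) : invF σ ⊆ invF τ := by
  obtain ⟨i, h, rfl, hlen⟩ := hc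
  rcases lt_trichotomy (σ⁻¹ ⟨i, Nat.lt_of_succ_lt h⟩) (σ⁻¹ ⟨i + 1, h⟩) with hlt | heq | hgt
  · rw [(invF_insert h σ hlt).1]
    exact Finset.subset_insert _ _
  · exfalso
    have := σ⁻¹.injective heq
    simp [Fin.ext_iff] at this
  · exfalso
    obtain ⟨h1, h2⟩ := invF_erase h σ hgt
    rw [len_eq, len_eq, h1, Finset.card_insert_of_notMem h2] at hlen
    omega

lemma leftWeakLe_subset {σ τ : Perm (Fin n)} (hle : leftWeakLe σ τ) :
    invF σ ⊆ invF τ := by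
  induction hle with
  | refl => exact Finset.Subset.refl _
  | tail _ hcov ih => exact ih.trans (leftCov_subset hcov)

lemma step_exists {σ τ : Perm (Fin n)} (hsub : invF σ ⊆ invF τ) (hne : σ ≠ τ) :
    ∃ σ' : Perm (Fin n), leftCov σ σ' ∧ invF σ' ⊆ invF τ ∧ len σ' = len σ + 1 := by
  have hπ : τ * σ⁻¹ ≠ 1 := by
    intro h1
    have hts : τ = σ := by rw [← one_mul σ, ← h1, mul_assoc, inv_mul_cancel, mul_one]
    exact hne hts.symm
  obtain ⟨i, h, hd⟩ := exists_descent hπ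
  have hτσ : ∀ x, τ x = (τ * σ⁻¹) (σ x) := by
    intro x; simp
  have hpq : σ⁻¹ ⟨i, Nat.lt_of_succ_lt h⟩ < σ⁻¹ ⟨i + 1, h⟩ := by
    rcases lt_trichotomy (σ⁻¹ ⟨i, Nat.lt_of_succ_lt h⟩) (σ⁻¹ ⟨i + 1, h⟩) with hlt | heq | hgt
    · exact hlt
    · exfalso; have := σ⁻¹.injective heq; simp [Fin.ext_iff] at this
    · exfalso
      have hmem : (σ⁻¹ ⟨i + 1, h⟩, σ⁻¹ ⟨i, Nat.lt_of_succ_lt h⟩) ∈ invF σ := by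
        rw [mem_invF]
        refine ⟨hgt, ?_⟩
        simp only [Perm.apply_inv_self]
        simp [Fin.lt_def]
      have hm2 := mem_invF.mp (hsub hmem)
      simp only at hm2
      rw [hτσ, hτσ, Perm.apply_inv_self, Perm.apply_inv_self] at hm2
      exact absurd (hd.trans hm2.2) (lt_irrefl _)
  obtain ⟨h1, h2⟩ := invF_insert h σ hpq
  have hlen : len (simpleT i h * σ) = len σ + 1 := by
    rw [len_eq, len_eq, h1, Finset.card_insert_of_notMem h2]
  have hcov : leftCov σ (simpleT i h * σ) := ⟨i, h, rfl, by omega⟩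
  refine ⟨simpleT i h * σ, hcov, ?_, hlen⟩
  rw [h1]
  refine Finset.insert_subset ?_ hsub
  rw [mem_invF]
  refine ⟨hpq, ?_⟩
  simp only
  rw [hτσ, hτσ, Perm.apply_inv_self, Perm.apply_inv_self]
  exact hd

lemma le_of_invF_subset_aux :
    ∀ k : ℕ, ∀ σ τ : Perm (Fin n), len τ ≤ len σ + k → invF σ ⊆ invF τ →
      leftWeakLe σ τ := by
  intro k
  induction k with
  | zero =>
    intro σ τ hk hsub
    rcases eq_or_ne σ τ with rfl | hne
    · exact Relation.ReflTransGen.refl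
    obtain ⟨σ', _, hsub', hlen'⟩ := step_exists hsub hne
    have := Finset.card_le_card hsub'
    rw [← len_eq, ← len_eq] at this
    omega
  | succ m ih =>
    intro σ τ hk hsub
    rcases eq_or_ne σ τ with rfl | hne
    · exact Relation.ReflTransGen.refl
    obtain ⟨σ', hcov, hsub', hlen'⟩ := step_exists hsub hne
    exact Relation.ReflTransGen.head hcov (ih _ _ (by omega) hsub')

lemma leftWeakLe_iff {σ τ : Perm (Fin n)} :
    leftWeakLe σ τ ↔ invF σ ⊆ invF τ :=
  ⟨leftWeakLe_subset, fun hs => le_of_invF_subset_aux (len τ) σ τ (by omega) hs⟩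

end Part2

section Part3
variable {n : ℕ}

lemma rowEnum_unique {e e' : Fin n → ℕ × ℕ} (he : RowEnum e) (he' : RowEnum e')
    (hr : Set.range e = Set.range e') : ∀ i, e i = e' i := by
  have hint : ∀ i : Fin n, ∃ j, e' j = e i := by
    intro i
    have : e i ∈ Set.range e' := hr ▸ Set.mem_range_self i
    exact this
  choose g hg using hint
  have hsm : StrictMono g := by
    intro a b hab
    exact (he' (g a) (g b)).mpr (by rw [hg, hg]; exact (he a b).mp hab)
  intro i
  rw [← hg i, strictMono_fin_id hsm i]

lemma rowEnum_inj {e : Fin n → ℕ × ℕ} (he : RowEnum e) : Function.Injective e := by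
  intro i j hij
  rcases lt_trichotomy i j with hlt | h | hlt
  · exfalso; have := (he i j).mp hlt; rw [hij] at this; omega
  · exact h
  · exfalso; have := (he j i).mp hlt; rw [hij] at this; omega

end Part3

theorem sigmaRD_eq_image_left_interval {n : ℕ} (D : Finset (ℕ × ℕ))
    (hcard : D.card = n) (hD : DiagOK D)
    (e u t r : Fin n → ℕ × ℕ)
    (he : RowEnum e) (hre : Set.range e = ↑D)
    (hu : SrcEnum u) (hru : Set.range u = ↑D)
    (ht : ColEnum t) (hrt : Set.range t = ↑D)
    (hr : ReadEnum r) (hrr : Set.range r = ↑D)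
    (wsrc : Perm (Fin n)) (hwsrc : ∀ p : Fin n, u (wsrc p) = r p)
    (wsink : Perm (Fin n)) (hwsink : ∀ p : Fin n, t (wsink p) = r p) :
    SigmaRD e = (fun γ => Fin.revPerm * γ⁻¹) '' leftInterval wsrc wsink := by
  classical
  have heinj : Function.Injective e := rowEnum_inj he
  -- e is the reverse of the reading enumeration
  have he2 : RowEnum (fun i : Fin n => r (Fin.rev i)) := by
    intro i j
    have H := hr (Fin.rev j) (Fin.rev i)
    rw [Fin.rev_lt_rev] at H
    dsimp only
    rw [H]
    omega
  have hrange2 : Set.range (fun i : Fin n => r (Fin.rev i)) = (↑D : Set (ℕ × ℕ)) := by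
    have : Set.range (r ∘ Fin.rev) = Set.range r :=
      Function.Surjective.range_comp Fin.rev_surjective r
    exact this.trans hrr
  have heq : ∀ i, e i = r (Fin.rev i) :=
    rowEnum_unique he he2 (hre.trans hrange2.symm)
  -- inversions of the source / sink reading words
  have hsrc : ∀ p q : Fin n, p < q → (wsrc q < wsrc p ↔ (r p).2 = (r q).2) := by
    intro p q hpq
    have A := (hr p q).mp hpq
    have B := hu (wsrc q) (wsrc p)
    rw [hwsrc, hwsrc] at B
    rw [B]
    omega
  have hsink : ∀ p q : Fin n, p < q → (wsink q < wsink p ↔ (r q).1 < (r p).1) := by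
    intro p q hpq
    have A := (hr p q).mp hpq
    have B := ht (wsink q) (wsink p)
    rw [hwsink, hwsink] at B
    rw [B]
    omega
  ext σ
  simp only [SigmaRD, Set.mem_setOf_eq, Set.mem_image, leftInterval]
  constructor
  · -- σ a linear extension gives an element of the interval
    intro hσ
    refine ⟨σ⁻¹ * Fin.revPerm, ⟨?_, ?_⟩, ?_⟩
    · -- wsrc ≤ γ
      apply leftWeakLe_iff.mpr
      rintro ⟨p, q⟩ hmem
      rw [mem_invF] at hmem ⊢
      obtain ⟨hpq, hinv⟩ := hmem
      refine ⟨hpq, ?_⟩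
      have hrow := (hsrc p q hpq).mp hinv
      have A := (hr p q).mp hpq
      simp only [Perm.mul_apply, Fin.revPerm_apply]
      apply hσ
      have hcq : e (Fin.rev q) = r q := by rw [heq, Fin.rev_rev]
      have hcp : e (Fin.rev p) = r p := by rw [heq, Fin.rev_rev]
      rw [hcq, hcp]
      refine ⟨by omega, by omega, ?_⟩
      intro hcon
      exact absurd (Fin.rev_injective hcon) (ne_of_gt hpq)
    · -- γ ≤ wsink
      apply leftWeakLe_iff.mpr
      rintro ⟨p, q⟩ hmem
      rw [mem_invF] at hmem ⊢
      obtain ⟨hpq, hinv⟩ := hmem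
      refine ⟨hpq, ?_⟩
      rw [hsink p q hpq]
      simp only [Perm.mul_apply, Fin.revPerm_apply] at hinv
      by_contra hcol
      push_neg at hcol
      have A := (hr p q).mp hpq
      have hcq : e (Fin.rev q) = r q := by rw [heq, Fin.rev_rev]
      have hcp : e (Fin.rev p) = r p := by rw [heq, Fin.rev_rev]
      rcases A with A1 | A2
      · have hlt := hσ (Fin.rev p) (Fin.rev q)
          ⟨by rw [hcp, hcq]; omega, by rw [hcp, hcq]; omega,
           fun hcon => absurd (Fin.rev_injective hcon) (ne_of_lt hpq)⟩
        exact absurd (hlt.trans hinv) (lt_irrefl _)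
      · omega
    · rw [mul_inv_rev, inv_inv, mul_inv_cancel_left]
  · -- elements of the interval give linear extensions
    rintro ⟨γ, ⟨hl1, hl2⟩, rfl⟩
    have S1 := leftWeakLe_subset hl1
    have S2 := leftWeakLe_subset hl2
    intro i j hij
    obtain ⟨h1, h2, hne⟩ := hij
    have hσinv : ∀ x : Fin n, ((Fin.revPerm * γ⁻¹ : Perm (Fin n)))⁻¹ x = γ (Fin.rev x) := by
      intro x
      rw [mul_inv_rev, inv_inv]
      simp [Perm.mul_apply, Equiv.Perm.inv_def]
    rw [hσinv, hσinv]
    have hije : e i ≠ e j := fun hh => hne (heinj hh)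
    have hcomp : (e i).1 ≠ (e j).1 ∨ (e i).2 ≠ (e j).2 := by
      by_contra hc
      push_neg at hc
      exact hije (Prod.ext hc.1 hc.2)
    rcases eq_or_lt_of_le h2 with heqrow | hltrow
    · -- same row
      have hecol : (e i).1 < (e j).1 := by omega
      have hij' : i < j := (he i j).mpr (Or.inr ⟨heqrow, hecol⟩)
      have hpq : Fin.rev j < Fin.rev i := Fin.rev_lt_rev.mpr hij'
      have hmem : (Fin.rev j, Fin.rev i) ∈ invF wsrc := by
        rw [mem_invF]
        refine ⟨hpq, (hsrc _ _ hpq).mpr ?_⟩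
        rw [← heq, ← heq]
        exact heqrow.symm
      exact (mem_invF.mp (S1 hmem)).2
    · -- strictly lower row
      have hji : j < i := (he j i).mpr (Or.inl hltrow)
      have hpq : Fin.rev i < Fin.rev j := Fin.rev_lt_rev.mpr hji
      have hne2 : γ (Fin.rev i) ≠ γ (Fin.rev j) :=
        fun hh => hne (Fin.rev_injective (γ.injective hh))
      rcases lt_or_gt_of_ne hne2 with hgood | hbad
      · exact hgood
      · exfalso
        have hmem : (Fin.rev i, Fin.rev j) ∈ invF γ := mem_invF.mpr ⟨hpq, hbad⟩
        have hcol := (hsink _ _ hpq).mp (mem_invF.mp (S2 hmem)).2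
        rw [← heq, ← heq] at hcol
        omega
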